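/- If d and d' are Möbius equivalent metrics on the same set X, then (X,d) is Ptolemy if and only if (X,d') is Ptolemy. -/

import Mathlib

private lemma ptolemy_degenerate {X : Type*} (m : MetricSpace X) (x y u v : X)
    (h : x = y ∨ u = v ∨ x = u ∨ x = v ∨ y = u ∨ y = v) :
    m.dist x y * m.dist u v ≤ m.dist x u * m.dist y v + m.dist x v * m.dist y u := by
  letI := m
  have nn : ∀ a b : X, 0 ≤ dist a b := fun a b => dist_nonneg
  have hc : ∀ a b : X, dist a b = dist b a := fun a b => dist_comm a b
  show dist x y * dist u v ≤ dist x u * dist y v + dist x v * dist y u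
  rcases h with h|h|h|h|h|h <;> subst h <;>
    simp [dist_self, dist_comm] <;>
    first
      | positivity
      | exact le_of_eq (mul_comm _ _)

private lemma ptolemy_dir {X : Type*} (m m' : MetricSpace X)
    (hmob : ∀ x y z w : X, x ≠ y → x ≠ z → x ≠ w → y ≠ z → y ≠ w → z ≠ w →
      (m.dist x y * m.dist z w) / (m.dist x z * m.dist y w) =
        (m'.dist x y * m'.dist z w) / (m'.dist x z * m'.dist y w))
    (hpt : ∀ x y u v : X,
        m.dist x y * m.dist u v ≤ m.dist x u * m.dist y v + m.dist x v * m.dist y u) :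
    ∀ x y u v : X,
        m'.dist x y * m'.dist u v ≤ m'.dist x u * m'.dist y v + m'.dist x v * m'.dist y u := by
  intro x y u v
  by_cases hd : x = y ∨ u = v ∨ x = u ∨ x = v ∨ y = u ∨ y = v
  · exact ptolemy_degenerate m' x y u v hd
  push_neg at hd
  obtain ⟨hxy, huv, hxu, hxv, hyu, hyv⟩ := hd
  have pos : ∀ a b : X, a ≠ b → 0 < m.dist a b := fun a b h => by
    letI := m; exact dist_pos.mpr h
  have pos' : ∀ a b : X, a ≠ b → 0 < m'.dist a b := fun a b h => by
    letI := m'; exact dist_pos.mpr h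
  have mc : ∀ a b : X, m.dist a b = m.dist b a := fun a b => by
    letI := m; exact dist_comm a b
  have mc' : ∀ a b : X, m'.dist a b = m'.dist b a := fun a b => by
    letI := m'; exact dist_comm a b
  have h1 := hmob x y u v hxy hxu hxv hyu hyv huv
  have h2 := hmob x v u y hxv hxu hxy (Ne.symm huv) (Ne.symm hyv) (Ne.symm hyu)
  rw [mc u y, mc v y, mc' u y, mc' v y] at h2
  have hD : 0 < m.dist x u * m.dist y v := mul_pos (pos _ _ hxu) (pos _ _ hyv)
  have hD' : 0 < m'.dist x u * m'.dist y v := mul_pos (pos' _ _ hxu) (pos' _ _ hyv)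
  have hpt' := hpt x y u v
  have h1c : m.dist x y * m.dist u v * (m'.dist x u * m'.dist y v) =
      m'.dist x y * m'.dist u v * (m.dist x u * m.dist y v) := by
    rw [div_eq_div_iff hD.ne' hD'.ne'] at h1
    linarith [h1]
  have h2c : m.dist x v * m.dist y u * (m'.dist x u * m'.dist y v) =
      m'.dist x v * m'.dist y u * (m.dist x u * m.dist y v) := by
    rw [div_eq_div_iff hD.ne' hD'.ne'] at h2
    linarith [h2]
  nlinarith [mul_le_mul_of_nonneg_left hpt' hD'.le, hD, hD', h1c, h2c,
    mul_pos hD hD']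

theorem moebius_equivalent_ptolemy {X : Type*} (m m' : MetricSpace X)
    (hmob : ∀ x y z w : X, x ≠ y → x ≠ z → x ≠ w → y ≠ z → y ≠ w → z ≠ w →
      (m.dist x y * m.dist z w) / (m.dist x z * m.dist y w) =
        (m'.dist x y * m'.dist z w) / (m'.dist x z * m'.dist y w)) :
    (∀ x y u v : X,
        m.dist x y * m.dist u v ≤ m.dist x u * m.dist y v + m.dist x v * m.dist y u) ↔
      (∀ x y u v : X,
        m'.dist x y * m'.dist u v ≤ m'.dist x u * m'.dist y v + m'.dist x v * m'.dist y u) := by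
  constructor
  · exact ptolemy_dir m m' hmob
  · exact ptolemy_dir m' m (fun x y z w h1 h2 h3 h4 h5 h6 =>
      (hmob x y z w h1 h2 h3 h4 h5 h6).symm)
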